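/- Let B = {u₁, …, uₙ} ⊆ ℕ^Σ be a finite set of Parikh vectors and let p ∈ ℕⁿ be a point with p ≠ 0 (some coordinate is nonzero). Then the following is derivable: (⋃_{1≤i≤n} expr(uᵢ))* ≡ expr(Σ_{1≤i≤n} pᵢ·uᵢ)* · ⋃_{1≤i≤n} ( expr(uᵢ)^{<pᵢ} · Π_{j≠i} expr(uⱼ)* ). -/

import Mathlib

namespace CKAnote

/-- Commutative regular expressions over an alphabet `α`. -/
inductive CRE (α : Type) where
  | zero : CRE α
  | one : CRE α
  | letter : α → CRE α
  | mul : CRE α → CRE α → CRE α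
  | union : CRE α → CRE α → CRE α
  | star : CRE α → CRE α

variable {α : Type} [Fintype α] [DecidableEq α]

/-- Semantics of a commutative regular expression as a set of Parikh vectors. -/
def sem : CRE α → Set (α → ℕ)
  | .zero => ∅
  | .one => {0}
  | .letter a => {Pi.single a 1}
  | .mul e f => {w | ∃ u ∈ sem e, ∃ v ∈ sem f, w = u + v}
  | .union e f => sem e ∪ sem f
  | .star e => ↑(AddSubmonoid.closure (sem e))

/-- Provable equality: the smallest congruence containing the axioms of
commutative Kleene algebra (where `e ≤ f` abbreviates `e ∪ f ≡ f`). -/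
inductive CKA : CRE α → CRE α → Prop
  | refl (e : CRE α) : CKA e e
  | symm {e f : CRE α} : CKA e f → CKA f e
  | trans {e f g : CRE α} : CKA e f → CKA f g → CKA e g
  | mul_congr {e e' f f' : CRE α} : CKA e e' → CKA f f' → CKA (e.mul f) (e'.mul f')
  | union_congr {e e' f f' : CRE α} : CKA e e' → CKA f f' → CKA (e.union f) (e'.union f')
  | star_congr {e e' : CRE α} : CKA e e' → CKA e.star e'.star
  | mul_assoc (e f g : CRE α) : CKA (e.mul (f.mul g)) ((e.mul f).mul g)
  | mul_comm (e f : CRE α) : CKA (e.mul f) (f.mul e)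
  | one_mul (e : CRE α) : CKA (CRE.one.mul e) e
  | union_assoc (e f g : CRE α) : CKA (e.union (f.union g)) ((e.union f).union g)
  | union_comm (e f : CRE α) : CKA (e.union f) (f.union e)
  | union_idem (e : CRE α) : CKA (e.union e) e
  | zero_union (e : CRE α) : CKA (CRE.zero.union e) e
  | zero_mul (e : CRE α) : CKA (CRE.zero.mul e) CRE.zero
  | left_distrib (e f g : CRE α) : CKA (e.mul (f.union g)) ((e.mul f).union (e.mul g))
  | star_unfold (e : CRE α) : CKA ((CRE.one.union (e.mul e.star)).union e.star) e.star
  | star_lfp {e f : CRE α} : CKA ((e.mul f).union f) f → CKA ((e.star.mul f).union f) f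

/-- `e ≤ f`, i.e. `e ∪ f ≡ f`. -/
def leq (e f : CRE α) : Prop := CKA (e.union f) f

/-- `e^n`, the `n`-fold product of `e` with itself. -/
def pow (e : CRE α) : ℕ → CRE α
  | 0 => CRE.one
  | n + 1 => e.mul (pow e n)

/-- `e^{<n}`, i.e. `(e ∪ 1)^(n-1)` for `n > 0` and `0` for `n = 0`. -/
def ltPow (e : CRE α) : ℕ → CRE α
  | 0 => CRE.zero
  | n + 1 => pow (e.union CRE.one) n

/-- Finite union of a list of expressions. -/
def unionList : List (CRE α) → CRE α
  | [] => CRE.zero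
  | e :: l => e.union (unionList l)

/-- Finite product of a list of expressions. -/
def prodList : List (CRE α) → CRE α
  | [] => CRE.one
  | e :: l => e.mul (prodList l)

/-- `expr(u)`: the product over `a ∈ α` of `u a` copies of the letter `a`. -/
noncomputable def exprVec (u : α → ℕ) : CRE α :=
  prodList ((Finset.univ : Finset α).toList.map (fun a => pow (CRE.letter a) (u a)))

/-- The union `⋃_{b ∈ B} expr(b)` for a finite set of Parikh vectors `B`. -/
noncomputable def unionVecs (B : Finset (α → ℕ)) : CRE α :=
  unionList (B.toList.map exprVec)

/-- The linear expression `expr(u) · (⋃_{b ∈ B} expr(b))*`. -/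
noncomputable def linExpr (u : α → ℕ) (B : Finset (α → ℕ)) : CRE α :=
  (exprVec u).mul (unionVecs B).star

/-- A finite set of Parikh vectors is independent when every Parikh vector
admits at most one representation as an `ℕ`-linear combination of its elements. -/
def Independent (B : Finset (α → ℕ)) : Prop :=
  ∀ c d : (α → ℕ) → ℕ, (∑ b ∈ B, c b • b) = (∑ b ∈ B, d b • b) → ∀ b ∈ B, c b = d b

/-- The semilinear expression associated to a list of linear data:
the finite union of the corresponding linear expressions. -/
noncomputable def semiLin (L : List ((α → ℕ) × Finset (α → ℕ))) : CRE α :=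
  unionList (L.map (fun p => linExpr p.1 p.2))

/-- The dimension of a semilinear expression: the maximum of the dimensions
of its linear components. -/
def dimSL (L : List ((α → ℕ) × Finset (α → ℕ))) : ℕ :=
  (L.map (fun p => p.2.card)).foldr max 0

/-- Finitary (star-free) expressions. -/
def NoStar : CRE α → Prop
  | .zero => True
  | .one => True
  | .letter _ => True
  | .mul e f => NoStar e ∧ NoStar f
  | .union e f => NoStar e ∧ NoStar f
  | .star _ => False

/-- Coordinatewise embedding of `ℕ^α` into `ℚ^α`. -/
def toQ (v : α → ℕ) : α → ℚ := fun a => (v a : ℚ)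

set_option linter.unusedSectionVars false
section Lemmas

theorem cka_leq {e f : CRE α} (h : CKA e f) : leq e f :=
  (CKA.union_congr h (CKA.refl f)).trans (CKA.union_idem f)

theorem leq_refl (e : CRE α) : leq e e := CKA.union_idem e

theorem leq_trans {e f g : CRE α} (h1 : leq e f) (h2 : leq f g) : leq e g :=
  ((CKA.union_congr (CKA.refl e) h2.symm).trans
    ((CKA.union_assoc e f g).trans (CKA.union_congr h1 (CKA.refl g)))).trans h2

theorem leq_antisymm {e f : CRE α} (h1 : leq e f) (h2 : leq f e) : CKA e f :=
  h2.symm.trans ((CKA.union_comm f e).trans h1)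

theorem union_leq {e f g : CRE α} (h1 : leq e g) (h2 : leq f g) : leq (e.union f) g :=
  (CKA.union_assoc e f g).symm.trans ((CKA.union_congr (CKA.refl e) h2).trans h1)

theorem leq_union_left (e f : CRE α) : leq e (e.union f) :=
  (CKA.union_assoc e e f).trans (CKA.union_congr (CKA.union_idem e) (CKA.refl f))

theorem leq_union_right (e f : CRE α) : leq f (e.union f) :=
  (CKA.union_assoc f e f).trans ((CKA.union_congr (CKA.union_comm f e) (CKA.refl f)).trans
    (((CKA.union_assoc e f f).symm).trans (CKA.union_congr (CKA.refl e) (CKA.union_idem f))))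

theorem union_mono {e e' f f' : CRE α} (h1 : leq e e') (h2 : leq f f') :
    leq (e.union f) (e'.union f') :=
  union_leq (leq_trans h1 (leq_union_left e' f')) (leq_trans h2 (leq_union_right e' f'))

theorem zero_leq (e : CRE α) : leq CRE.zero e := CKA.zero_union e

theorem mul_one (e : CRE α) : CKA (e.mul CRE.one) e := (CKA.mul_comm e CRE.one).trans (CKA.one_mul e)

theorem mul_zero (e : CRE α) : CKA (e.mul CRE.zero) CRE.zero :=
  (CKA.mul_comm e CRE.zero).trans (CKA.zero_mul e)

theorem right_distrib (e f g : CRE α) :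
    CKA ((e.union f).mul g) ((e.mul g).union (f.mul g)) :=
  (CKA.mul_comm _ g).trans ((CKA.left_distrib g e f).trans
    (CKA.union_congr (CKA.mul_comm g e) (CKA.mul_comm g f)))

theorem mul_leq_mul_left {e e' : CRE α} (f : CRE α) (h : leq e e') : leq (e.mul f) (e'.mul f) :=
  (right_distrib e e' f).symm.trans (CKA.mul_congr h (CKA.refl f))

theorem mul_leq_mul_right (e : CRE α) {f f' : CRE α} (h : leq f f') : leq (e.mul f) (e.mul f') :=
  (CKA.left_distrib e f f').symm.trans (CKA.mul_congr (CKA.refl e) h)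

theorem mul_mono {e e' f f' : CRE α} (h1 : leq e e') (h2 : leq f f') :
    leq (e.mul f) (e'.mul f') :=
  leq_trans (mul_leq_mul_left f h1) (mul_leq_mul_right e' h2)

theorem mul_mul_mul_comm (a b c d : CRE α) :
    CKA ((a.mul b).mul (c.mul d)) ((a.mul c).mul (b.mul d)) :=
  (CKA.mul_assoc a b (c.mul d)).symm.trans <|
    (CKA.mul_congr (CKA.refl a) ((CKA.mul_assoc b c d).trans
      ((CKA.mul_congr (CKA.mul_comm b c) (CKA.refl d)).trans (CKA.mul_assoc c b d).symm))).trans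
      (CKA.mul_assoc a c (b.mul d))

theorem one_leq_star (e : CRE α) : leq CRE.one e.star :=
  leq_trans (leq_union_left _ _) (CKA.star_unfold e)

theorem mul_star_leq (e : CRE α) : leq (e.mul e.star) e.star :=
  leq_trans (leq_union_right _ _) (CKA.star_unfold e)

theorem self_leq_star (e : CRE α) : leq e e.star :=
  leq_trans (cka_leq (mul_one e).symm)
    (leq_trans (mul_leq_mul_right e (one_leq_star e)) (mul_star_leq e))

theorem star_mul_star_leq (e : CRE α) : leq (e.star.mul e.star) e.star :=
  CKA.star_lfp (mul_star_leq e)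

theorem star_leq_of {e f : CRE α} (h1 : leq (e.mul f) f) (h2 : leq CRE.one f) : leq e.star f :=
  leq_trans (cka_leq (mul_one e.star).symm)
    (leq_trans (mul_leq_mul_right e.star h2) (CKA.star_lfp h1))

theorem star_mono {e f : CRE α} (h : leq e f) : leq e.star f.star :=
  star_leq_of (leq_trans (mul_leq_mul_left f.star h) (mul_star_leq f)) (one_leq_star f)

theorem star_star_leq (e : CRE α) : leq e.star.star e.star :=
  star_leq_of (star_mul_star_leq e) (one_leq_star e)

theorem star_leq_one_union (e : CRE α) : leq e.star (CRE.one.union (e.mul e.star)) :=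
  star_leq_of
    (leq_trans (cka_leq (CKA.left_distrib e CRE.one (e.mul e.star)))
      (union_leq
        (leq_trans (cka_leq (mul_one e))
          (leq_trans (leq_trans (cka_leq (mul_one e).symm)
            (mul_leq_mul_right e (one_leq_star e))) (leq_union_right _ _)))
        (leq_trans (mul_leq_mul_right e (mul_star_leq e)) (leq_union_right _ _))))
    (leq_union_left _ _)

theorem pow_add_cka (e : CRE α) (m n : ℕ) :
    CKA (pow e (m + n)) ((pow e m).mul (pow e n)) := by
  induction m with
  | zero => rw [Nat.zero_add]; exact (CKA.one_mul _).symm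
  | succ m ih =>
    rw [Nat.succ_add]
    exact (CKA.mul_congr (CKA.refl e) ih).trans (CKA.mul_assoc e (pow e m) (pow e n))

theorem pow_mono {e f : CRE α} (h : leq e f) (n : ℕ) : leq (pow e n) (pow f n) := by
  induction n with
  | zero => exact leq_refl _
  | succ n ih => exact mul_mono h ih

theorem one_leq_pow {e : CRE α} (h : leq CRE.one e) (n : ℕ) : leq CRE.one (pow e n) := by
  induction n with
  | zero => exact leq_refl _
  | succ n ih => exact leq_trans (cka_leq (CKA.one_mul CRE.one).symm) (mul_mono h ih)

theorem pow_star_leq (e : CRE α) (n : ℕ) : leq (pow e.star n) e.star := by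
  induction n with
  | zero => exact one_leq_star e
  | succ n ih => exact leq_trans (mul_leq_mul_right e.star ih) (star_mul_star_leq e)

theorem pow_leq_star (e : CRE α) (n : ℕ) : leq (pow e n) e.star :=
  leq_trans (pow_mono (self_leq_star e) n) (pow_star_leq e n)

theorem ltPow_leq_star (e : CRE α) (n : ℕ) : leq (ltPow e n) e.star := by
  cases n with
  | zero => exact zero_leq _
  | succ n =>
    exact leq_trans (pow_mono (union_leq (self_leq_star e) (one_leq_star e)) n)
      (pow_star_leq e n)

theorem one_leq_ltPow (e : CRE α) {n : ℕ} (h : 0 < n) : leq CRE.one (ltPow e n) := by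
  cases n with
  | zero => omega
  | succ n => exact one_leq_pow (leq_union_right e CRE.one) n

theorem pow_leq_ltPow_succ (e : CRE α) (n : ℕ) : leq (pow e n) (ltPow e (n + 1)) :=
  pow_mono (leq_union_left e CRE.one) n

theorem pow_leq_pow_succ {e : CRE α} (h : leq CRE.one e) (n : ℕ) :
    leq (pow e n) (pow e (n + 1)) :=
  leq_trans (cka_leq (CKA.one_mul (pow e n)).symm) (mul_leq_mul_left (pow e n) h)

theorem ltPow_leq_succ (e : CRE α) (n : ℕ) : leq (ltPow e n) (ltPow e (n + 1)) := by
  cases n with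
  | zero => exact zero_leq _
  | succ n => exact pow_leq_pow_succ (leq_union_right e CRE.one) n

theorem mul_ltPow_succ (e : CRE α) (n : ℕ) :
    leq (e.mul (ltPow e (n + 1))) ((ltPow e (n + 1)).union (pow e (n + 1))) := by
  induction n with
  | zero => exact leq_trans (cka_leq (mul_one e)) (leq_trans (cka_leq (mul_one e).symm)
      (leq_union_right _ _))
  | succ n ih =>
    -- e * ((e∪1) * X) ≤ (e∪1)*(e*X) ≤ (e∪1)*(X ∪ e^{n+1}) ≤ ...
    refine leq_trans (cka_leq ((CKA.mul_assoc e _ _).trans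
      ((CKA.mul_congr (CKA.mul_comm e (e.union CRE.one)) (CKA.refl _)).trans
        (CKA.mul_assoc (e.union CRE.one) e (pow (e.union CRE.one) n)).symm))) ?_
    refine leq_trans (mul_leq_mul_right (e.union CRE.one) ih) ?_
    refine leq_trans (cka_leq (CKA.left_distrib (e.union CRE.one) _ _)) ?_
    refine union_leq (leq_union_left _ _) ?_
    refine leq_trans (cka_leq (right_distrib e CRE.one (pow e (n + 1)))) ?_
    refine union_leq (leq_union_right _ _) ?_
    exact leq_trans (cka_leq (CKA.one_mul _))
      (leq_trans (pow_leq_ltPow_succ e (n + 1)) (leq_union_left _ _))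

theorem star_split (e : CRE α) (n : ℕ) :
    leq e.star (((pow e n).mul e.star).union (ltPow e n)) := by
  induction n with
  | zero => exact leq_trans (cka_leq (CKA.one_mul e.star).symm) (leq_union_left _ _)
  | succ n ih =>
    refine leq_trans ih (union_leq ?_ (leq_trans (ltPow_leq_succ e n) (leq_union_right _ _)))
    refine leq_trans (mul_leq_mul_right (pow e n) (star_leq_one_union e)) ?_
    refine leq_trans (cka_leq (CKA.left_distrib (pow e n) CRE.one (e.mul e.star))) ?_
    refine union_leq ?_ ?_
    · exact leq_trans (cka_leq (mul_one (pow e n)))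
        (leq_trans (pow_leq_ltPow_succ e n) (leq_union_right _ _))
    · refine leq_trans (cka_leq ((CKA.mul_assoc (pow e n) e e.star).trans
        (CKA.mul_congr (CKA.mul_comm (pow e n) e) (CKA.refl e.star)))) ?_
      exact leq_union_left _ _

theorem unionList_leq {l : List (CRE α)} {g : CRE α} (h : ∀ x ∈ l, leq x g) :
    leq (unionList l) g := by
  induction l with
  | nil => exact zero_leq g
  | cons x t ih =>
    exact union_leq (h x List.mem_cons_self) (ih fun y hy => h y (List.mem_cons_of_mem x hy))

theorem leq_unionList {l : List (CRE α)} {x : CRE α} (h : x ∈ l) : leq x (unionList l) := by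
  induction l with
  | nil => simp at h
  | cons y t ih =>
    rcases List.mem_cons.mp h with rfl | h
    · exact leq_union_left _ _
    · exact leq_trans (ih h) (leq_union_right _ _)

theorem mul_unionList (g : CRE α) (l : List (CRE α)) :
    CKA (g.mul (unionList l)) (unionList (l.map (fun x => g.mul x))) := by
  induction l with
  | nil => exact mul_zero g
  | cons x t ih =>
    exact (CKA.left_distrib g x (unionList t)).trans (CKA.union_congr (CKA.refl _) ih)

theorem prodList_map_congr {ι : Type*} {l : List ι} {f g : ι → CRE α}
    (h : ∀ x ∈ l, CKA (f x) (g x)) :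
    CKA (prodList (l.map f)) (prodList (l.map g)) := by
  induction l with
  | nil => exact CKA.refl _
  | cons x t ih =>
    exact CKA.mul_congr (h x List.mem_cons_self)
      (ih fun y hy => h y (List.mem_cons_of_mem x hy))

theorem prodList_map_mono {ι : Type*} {l : List ι} {f g : ι → CRE α}
    (h : ∀ x ∈ l, leq (f x) (g x)) :
    leq (prodList (l.map f)) (prodList (l.map g)) := by
  induction l with
  | nil => exact leq_refl _
  | cons x t ih =>
    exact mul_mono (h x List.mem_cons_self)
      (ih fun y hy => h y (List.mem_cons_of_mem x hy))

theorem one_leq_prodList {l : List (CRE α)} (h : ∀ x ∈ l, leq CRE.one x) :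
    leq CRE.one (prodList l) := by
  induction l with
  | nil => exact leq_refl _
  | cons x t ih =>
    exact leq_trans (cka_leq (CKA.one_mul CRE.one).symm)
      (mul_mono (h x List.mem_cons_self) (ih fun y hy => h y (List.mem_cons_of_mem x hy)))

theorem prodList_leq_of {l : List (CRE α)} {s : CRE α} (hs : leq (s.mul s) s)
    (h1 : leq CRE.one s) (h : ∀ x ∈ l, leq x s) : leq (prodList l) s := by
  induction l with
  | nil => exact h1
  | cons x t ih =>
    exact leq_trans (mul_mono (h x List.mem_cons_self)
      (ih fun y hy => h y (List.mem_cons_of_mem x hy))) hs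

theorem prodList_perm {l l' : List (CRE α)} (h : l.Perm l') :
    CKA (prodList l) (prodList l') := by
  induction h with
  | nil => exact CKA.refl _
  | cons x _ ih => exact CKA.mul_congr (CKA.refl x) ih
  | swap x y t =>
    exact (CKA.mul_assoc y x (prodList t)).trans
      ((CKA.mul_congr (CKA.mul_comm y x) (CKA.refl _)).trans
        (CKA.mul_assoc x y (prodList t)).symm)
  | trans _ _ ih1 ih2 => exact ih1.trans ih2

theorem prodList_one {l : List (CRE α)} (h : ∀ x ∈ l, CKA x CRE.one) :
    CKA (prodList l) CRE.one := by
  induction l with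
  | nil => exact CKA.refl _
  | cons x t ih =>
    exact (CKA.mul_congr (h x List.mem_cons_self)
      (ih fun y hy => h y (List.mem_cons_of_mem x hy))).trans (CKA.one_mul CRE.one)

theorem prodList_map_mul {ι : Type*} (l : List ι) (f g : ι → CRE α) :
    CKA (prodList (l.map (fun x => (f x).mul (g x))))
      ((prodList (l.map f)).mul (prodList (l.map g))) := by
  induction l with
  | nil => exact (CKA.one_mul CRE.one).symm
  | cons x t ih =>
    exact (CKA.mul_congr (CKA.refl _) ih).trans
      (mul_mul_mul_comm (f x) (g x) (prodList (t.map f)) (prodList (t.map g)))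

theorem exprVec_add (u v : α → ℕ) :
    CKA (exprVec (u + v)) ((exprVec u).mul (exprVec v)) := by
  unfold exprVec
  refine CKA.trans (prodList_map_congr (f := fun a => pow (CRE.letter a) ((u + v) a))
    (g := fun a => (pow (CRE.letter a) (u a)).mul (pow (CRE.letter a) (v a))) ?_) ?_
  · intro a _
    exact pow_add_cka (CRE.letter a) (u a) (v a)
  · exact prodList_map_mul _ _ _

theorem exprVec_zero : CKA (exprVec (0 : α → ℕ)) CRE.one := by
  unfold exprVec
  refine prodList_one ?_
  intro x hx
  rcases List.mem_map.mp hx with ⟨a, -, rfl⟩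
  exact CKA.refl _

theorem exprVec_smul (m : ℕ) (u : α → ℕ) :
    CKA (exprVec (m • u)) (pow (exprVec u) m) := by
  induction m with
  | zero => rw [zero_smul]; exact exprVec_zero
  | succ m ih =>
    rw [succ_nsmul]
    exact (exprVec_add (m • u) u).trans
      ((CKA.mul_congr ih (CKA.refl _)).trans (CKA.mul_comm _ _))

theorem exprVec_listSum (l : List (α → ℕ)) :
    CKA (exprVec l.sum) (prodList (l.map exprVec)) := by
  induction l with
  | nil => exact exprVec_zero
  | cons x t ih =>
    rw [List.sum_cons]
    exact (exprVec_add x t.sum).trans (CKA.mul_congr (CKA.refl _) ih)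

/-- auxiliary "pieces" expression -/
def piecesAux {ι : Type} (f : ι → CRE α) (q : ι → ℕ) : List ι → CRE α
  | [] => CRE.zero
  | j :: t =>
    ((ltPow (f j) (q j)).mul (prodList (t.map fun x => (f x).star))).union
      ((f j).star.mul (piecesAux f q t))

theorem lemA {ι : Type} (f : ι → CRE α) (q : ι → ℕ) (l : List ι) :
    leq (prodList (l.map fun j => (f j).star))
      ((prodList (l.map fun j => (pow (f j) (q j)).mul (f j).star)).union
        (piecesAux f q l)) := by
  induction l with
  | nil => exact leq_union_left _ _
  | cons j t ih =>
    show leq ((f j).star.mul (prodList (t.map fun x => (f x).star))) _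
    refine leq_trans (mul_leq_mul_left _ (star_split (f j) (q j))) ?_
    refine leq_trans (cka_leq (right_distrib _ _ _)) ?_
    refine union_leq ?_ ?_
    · -- (pow (f j) (q j) * (f j)*) * stars t
      refine leq_trans (mul_leq_mul_right _ ih) ?_
      refine leq_trans (cka_leq (CKA.left_distrib _ _ _)) ?_
      refine union_leq (leq_union_left _ _) ?_
      -- (pow * star) * piecesAux t ≤ (f j)* * piecesAux t
      refine leq_trans (mul_leq_mul_left _
        (leq_trans (mul_leq_mul_left _ (pow_leq_star (f j) (q j))) (star_mul_star_leq (f j)))) ?_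
      exact leq_trans (leq_union_right
        ((ltPow (f j) (q j)).mul (prodList (t.map fun x => (f x).star))) _)
        (leq_union_right _ _)
    · -- ltPow * stars t : the head piece
      exact leq_trans (leq_union_left _ ((f j).star.mul (piecesAux f q t)))
        (leq_union_right _ _)

theorem piecesAux_leq {ι : Type} [DecidableEq ι] (f : ι → CRE α) (q : ι → ℕ) (l : List ι) :
    leq (piecesAux f q l)
      (unionList (l.map fun j =>
        (ltPow (f j) (q j)).mul (prodList ((l.erase j).map fun x => (f x).star)))) := by
  induction l with
  | nil => exact zero_leq _
  | cons j t ih =>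
    refine union_leq ?_ ?_
    · -- head piece: (j::t).erase j = t
      refine leq_trans ?_ (leq_union_left _ _)
      simp only [List.erase_cons_head]
      exact leq_refl _
    · refine leq_trans (mul_leq_mul_right _ ih) ?_
      refine leq_trans (cka_leq (mul_unionList _ _)) ?_
      rw [List.map_map]
      refine unionList_leq ?_
      intro x hx
      rcases List.mem_map.mp hx with ⟨y, hy, rfl⟩
      -- x = (f j)* * (ltPow (f y) (q y) * stars (t.erase y))
      have hperm : (j :: t.erase y).Perm ((j :: t).erase y) := by
        by_cases hyj : y = j
        · subst hyj
          rw [List.erase_cons_head]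
          exact (List.perm_cons_erase hy).symm
        · rw [List.erase_cons_tail (by simpa using Ne.symm hyj)]
      have step : leq ((f j).star.mul ((ltPow (f y) (q y)).mul
          (prodList ((t.erase y).map fun x => (f x).star))))
          ((ltPow (f y) (q y)).mul (prodList (((j :: t).erase y).map fun x => (f x).star))) := by
        refine leq_trans (cka_leq ((CKA.mul_assoc _ _ _).trans
          ((CKA.mul_congr (CKA.mul_comm _ _) (CKA.refl _)).trans (CKA.mul_assoc _ _ _).symm))) ?_
        refine mul_leq_mul_right _ ?_
        exact cka_leq (prodList_perm (hperm.map fun x => (f x).star))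
      refine leq_trans step ?_
      refine leq_unionList ?_
      exact List.mem_map.mpr ⟨y, List.mem_cons_of_mem j hy, rfl⟩

theorem mul_left_comm_cka (a b c : CRE α) :
    CKA (a.mul (b.mul c)) (b.mul (a.mul c)) :=
  (CKA.mul_assoc a b c).trans ((CKA.mul_congr (CKA.mul_comm a b) (CKA.refl c)).trans
    (CKA.mul_assoc b a c).symm)

theorem mul_stars_absorb {ι : Type} [DecidableEq ι] (f : ι → CRE α) {l : List ι} {x : ι}
    (hx : x ∈ l) :
    leq ((f x).mul (prodList (l.map fun j => (f j).star)))
      (prodList (l.map fun j => (f j).star)) := by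
  have h1 : CKA (prodList (l.map fun j => (f j).star))
      ((f x).star.mul (prodList ((l.erase x).map fun j => (f j).star))) :=
    prodList_perm ((List.perm_cons_erase hx).map fun j => (f j).star)
  refine leq_trans (mul_leq_mul_right _ (cka_leq h1)) ?_
  refine leq_trans (cka_leq (CKA.mul_assoc _ _ _)) ?_
  exact leq_trans (mul_leq_mul_left _ (mul_star_leq (f x))) (cka_leq h1.symm)

theorem perm_cons_filter (n : ℕ) (k : Fin n) :
    (k :: (List.finRange n).filter (fun j => j ≠ k)).Perm (List.finRange n) := by
  refine (List.perm_ext_iff_of_nodup ?_ (List.nodup_finRange n)).mpr ?_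
  · refine List.nodup_cons.mpr ⟨?_, (List.nodup_finRange n).filter _⟩
    simp [List.mem_filter]
  · intro a
    simp only [List.mem_cons, List.mem_filter, List.mem_finRange, true_and, decide_eq_true_eq]
    constructor
    · intro _; trivial
    · intro _; by_cases h : a = k
      · exact Or.inl h
      · exact Or.inr h

theorem perm_cons_erase_filter (n : ℕ) (k j₀ : Fin n) (h : j₀ ≠ k) :
    (k :: ((List.finRange n).filter (fun j => j ≠ k)).erase j₀).Perm
      ((List.finRange n).filter (fun j => j ≠ j₀)) := by
  have hnd : ((List.finRange n).filter (fun j => j ≠ k)).Nodup :=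
    (List.nodup_finRange n).filter _
  refine (List.perm_ext_iff_of_nodup ?_ ((List.nodup_finRange n).filter _)).mpr ?_
  · refine List.nodup_cons.mpr ⟨?_, hnd.erase _⟩
    intro hmem
    have := (hnd.mem_erase_iff.mp hmem).2
    simp [List.mem_filter] at this
  · intro a
    simp only [List.mem_cons, hnd.mem_erase_iff, List.mem_filter, List.mem_finRange, true_and,
      decide_eq_true_eq]
    constructor
    · rintro (rfl | ⟨h1, _⟩)
      · exact fun hh => h hh.symm
      · exact h1
    · intro h1
      by_cases h2 : a = k
      · exact Or.inl h2
      · exact Or.inr ⟨h1, h2⟩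

theorem base_vector_aux (n : ℕ) (e : Fin n → CRE α) (p : Fin n → ℕ) (w : CRE α)
    (hw : CKA w (prodList ((List.finRange n).map fun i => pow (e i) (p i))))
    (k : Fin n) (hk : 0 < p k) :
    CKA (unionList ((List.finRange n).map e)).star
      (w.star.mul (unionList ((List.finRange n).map fun i =>
        (ltPow (e i) (p i)).mul
          (prodList (((List.finRange n).filter fun j => j ≠ i).map fun j => (e j).star))))) := by
  set E := unionList ((List.finRange n).map e) with hE
  set piece : Fin n → CRE α := fun i =>
    (ltPow (e i) (p i)).mul
      (prodList (((List.finRange n).filter fun j => j ≠ i).map fun j => (e j).star)) with hpiece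
  set P := unionList ((List.finRange n).map piece) with hP
  -- basic facts
  have hmemE : ∀ i : Fin n, leq (e i) E := fun i =>
    leq_unionList (List.mem_map.mpr ⟨i, List.mem_finRange i, rfl⟩)
  have hstarE : ∀ i : Fin n, leq (e i).star E.star := fun i => star_mono (hmemE i)
  have hw_le : leq w E.star := by
    refine leq_trans (cka_leq hw) (prodList_leq_of (star_mul_star_leq E) (one_leq_star E) ?_)
    intro x hx
    rcases List.mem_map.mp hx with ⟨i, -, rfl⟩
    exact leq_trans (pow_mono (leq_trans (hmemE i) (self_leq_star E)) (p i)) (pow_star_leq E (p i))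
  have hpiece_le : ∀ i : Fin n, leq (piece i) E.star := by
    intro i
    refine leq_trans (mul_mono (leq_trans (ltPow_leq_star (e i) (p i)) (hstarE i)) ?_)
      (star_mul_star_leq E)
    refine prodList_leq_of (star_mul_star_leq E) (one_leq_star E) ?_
    intro x hx
    rcases List.mem_map.mp hx with ⟨j, -, rfl⟩
    exact hstarE j
  have hpieceP : ∀ i : Fin n, leq (piece i) P := fun i =>
    leq_unionList (List.mem_map.mpr ⟨i, List.mem_finRange i, rfl⟩)
  have hP_wP : leq P (w.star.mul P) :=
    leq_trans (cka_leq (CKA.one_mul P).symm) (mul_leq_mul_left P (one_leq_star w))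
  have honeP : leq CRE.one P := by
    refine leq_trans ?_ (hpieceP k)
    refine leq_trans (cka_leq (CKA.one_mul CRE.one).symm)
      (mul_mono (one_leq_ltPow (e k) hk) (one_leq_prodList ?_))
    intro x hx
    rcases List.mem_map.mp hx with ⟨j, -, rfl⟩
    exact one_leq_star (e j)
  refine leq_antisymm ?_ ?_
  · -- hard direction: E* ≤ w* · P
    refine star_leq_of ?_ (leq_trans honeP hP_wP)
    -- E · (w* · P) ≤ w* · P
    have crux : ∀ i k' : Fin n, leq ((e i).mul (piece k')) (w.star.mul P) := by
      intro i k'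
      by_cases hik : i = k'
      · subst hik
        rcases Nat.eq_zero_or_pos (p i) with hpi | hpi
        · -- piece i is zero
          refine leq_trans (cka_leq ?_) (zero_leq _)
          show CKA ((e i).mul ((ltPow (e i) (p i)).mul _)) CRE.zero
          rw [hpi]
          exact (CKA.mul_congr (CKA.refl (e i)) (CKA.zero_mul _)).trans (mul_zero (e i))
        · obtain ⟨m, hm⟩ : ∃ m, p i = m + 1 := ⟨p i - 1, by omega⟩
          have hml : leq ((e i).mul (ltPow (e i) (p i)))
              ((ltPow (e i) (p i)).union (pow (e i) (p i))) := by
            rw [hm]; exact mul_ltPow_succ (e i) m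
          show leq ((e i).mul ((ltPow (e i) (p i)).mul _)) _
          refine leq_trans (cka_leq (CKA.mul_assoc _ _ _)) ?_
          refine leq_trans (mul_leq_mul_left _ hml) ?_
          refine leq_trans (cka_leq (right_distrib _ _ _)) ?_
          refine union_leq (leq_trans (hpieceP i) hP_wP) ?_
          -- pow (e i) (p i) · stars(l') ≤ w* · P
          refine leq_trans (mul_leq_mul_right _ (lemA e p _)) ?_
          refine leq_trans (cka_leq (CKA.left_distrib _ _ _)) ?_
          refine union_leq ?_ ?_
          · -- full term: gives w · stars ≤ w* · piece i ≤ w* P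
            refine leq_trans (mul_leq_mul_right _ (cka_leq (prodList_map_mul _ _ _))) ?_
            refine leq_trans (cka_leq (CKA.mul_assoc _ _ _)) ?_
            have hprod : CKA
                ((pow (e i) (p i)).mul
                  (prodList ((((List.finRange n).filter fun j => j ≠ i)).map
                    fun j => pow (e j) (p j)))) w := by
              refine CKA.trans ?_ hw.symm
              exact prodList_perm ((perm_cons_filter n i).map fun j => pow (e j) (p j))
            refine leq_trans (cka_leq (CKA.mul_congr hprod (CKA.refl _))) ?_
            refine leq_trans (mul_leq_mul_right w
              (leq_trans (cka_leq (CKA.one_mul _).symm)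
                (mul_leq_mul_left _ (one_leq_ltPow (e i) hpi)))) ?_
            exact mul_mono (self_leq_star w) (hpieceP i)
          · -- piecesAux part
            refine leq_trans (mul_leq_mul_left _ (pow_leq_star (e i) (p i))) ?_
            refine leq_trans (mul_leq_mul_right _ (piecesAux_leq e p _)) ?_
            refine leq_trans (cka_leq (mul_unionList _ _)) ?_
            rw [List.map_map]
            refine unionList_leq ?_
            intro x hx
            rcases List.mem_map.mp hx with ⟨j₀, hj₀, rfl⟩
            have hj₀i : j₀ ≠ i := by
              have := (List.mem_filter.mp hj₀).2
              simpa using this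
            refine leq_trans (cka_leq (mul_left_comm_cka _ _ _)) ?_
            have hperm : CKA ((e i).star.mul
                (prodList (((((List.finRange n).filter fun j => j ≠ i)).erase j₀).map
                  fun x => (e x).star)))
                (prodList (((List.finRange n).filter fun j => j ≠ j₀).map
                  fun j => (e j).star)) :=
              prodList_perm ((perm_cons_erase_filter n i j₀ hj₀i).map fun j => (e j).star)
            refine leq_trans (mul_leq_mul_right _ (cka_leq hperm)) ?_
            exact leq_trans (hpieceP j₀) hP_wP
      · -- i ≠ k' : absorb into the stars
        have hifilter : i ∈ (List.finRange n).filter fun j => j ≠ k' := by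
          refine List.mem_filter.mpr ⟨List.mem_finRange i, ?_⟩
          simpa using hik
        show leq ((e i).mul ((ltPow (e k') (p k')).mul _)) _
        refine leq_trans (cka_leq (mul_left_comm_cka _ _ _)) ?_
        refine leq_trans (mul_leq_mul_right _ (mul_stars_absorb e hifilter)) ?_
        exact leq_trans (hpieceP k') hP_wP
    -- assemble: E · (w*·P) ≤ w*·P
    have key : ∀ i : Fin n, leq ((e i).mul (w.star.mul P)) (w.star.mul P) := by
      intro i
      refine leq_trans (cka_leq (mul_left_comm_cka (e i) w.star P)) ?_
      have h1 : leq ((e i).mul P) (w.star.mul P) := by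
        refine leq_trans (cka_leq (mul_unionList (e i) _)) ?_
        rw [List.map_map]
        refine unionList_leq ?_
        intro x hx
        rcases List.mem_map.mp hx with ⟨k', -, rfl⟩
        exact crux i k'
      refine leq_trans (mul_leq_mul_right w.star h1) ?_
      refine leq_trans (cka_leq (CKA.mul_assoc _ _ _)) ?_
      exact mul_leq_mul_left P (star_mul_star_leq w)
    rw [hE]
    refine leq_trans (cka_leq ((CKA.mul_comm _ _).trans (mul_unionList _ _))) ?_
    rw [List.map_map]
    refine unionList_leq ?_
    intro x hx
    rcases List.mem_map.mp hx with ⟨i, -, rfl⟩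
    exact leq_trans (cka_leq (CKA.mul_comm _ _)) (key i)
  · -- easy direction: w* · P ≤ E*
    refine leq_trans (mul_mono (leq_trans (star_mono hw_le) (star_star_leq E)) ?_)
      (star_mul_star_leq E)
    refine unionList_leq ?_
    intro x hx
    rcases List.mem_map.mp hx with ⟨i, -, rfl⟩
    exact hpiece_le i

end Lemmas

/-- For `B = {u₁, …, uₙ}` and a nonzero point `p ∈ ℕⁿ`:
`(⋃ᵢ expr(uᵢ))* ≡ expr(Σᵢ pᵢ·uᵢ)* · ⋃ᵢ (expr(uᵢ)^{<pᵢ} · Πⱼ≠ᵢ expr(uⱼ)*)`. -/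
theorem base_vector (n : ℕ) (u : Fin n → α → ℕ) (p : Fin n → ℕ) (hp : p ≠ 0) :
    CKA (unionList ((List.finRange n).map (fun i => exprVec (u i)))).star
      ((exprVec (∑ i, p i • u i)).star.mul
        (unionList ((List.finRange n).map (fun i =>
          (ltPow (exprVec (u i)) (p i)).mul
            (prodList (((List.finRange n).filter (fun j => j ≠ i)).map
              (fun j => (exprVec (u j)).star))))))) := by
  obtain ⟨k, hk⟩ := Function.ne_iff.mp hp
  have hw : CKA (exprVec (∑ i, p i • u i))
      (prodList ((List.finRange n).map fun i => pow (exprVec (u i)) (p i))) := by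
    rw [Fin.sum_univ_def]
    refine (exprVec_listSum _).trans ?_
    rw [List.map_map]
    exact prodList_map_congr fun i _ => exprVec_smul (p i) (u i)
  exact base_vector_aux n (fun i => exprVec (u i)) p _ hw k (Nat.pos_of_ne_zero hk)

end CKAnote
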